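/- For every pyramidal tour with step-backs x, define the pyramidal tour x̂ (without step-backs) by: city i is visited by x̂ in descending order iff i is part of a step-back in x, and in ascending order otherwise. Then the vertices v(x) and v(x̂) are adjacent in the 1-skeleton of PSB(n). -/

import Mathlib

/-- A Hamiltonian tour on the cities `{1,…,n}` (represented as `Fin n`,
city `c` corresponding to the element `c-1`): a permutation acting cyclically on all cities. -/
def IsTour {n : ℕ} (τ : Equiv.Perm (Fin n)) : Prop :=
  ∀ i j : Fin n, ∃ k : ℕ, (τ ^ k) i = j

/-- `i` is a peak of the tour `τ`. -/
def IsPeak {n : ℕ} (τ : Equiv.Perm (Fin n)) (i : Fin n) : Prop :=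
  τ⁻¹ i < i ∧ τ i < i

/-- `i` is a step-back peak of `τ`: either `τ⁻¹ i < i`, `τ i = i - 1`, `τ² i > i`
(ascending step-back) or `τ⁻² i > i`, `τ⁻¹ i = i - 1`, `τ i < i` (descending step-back). -/
def IsStepBackPeak {n : ℕ} (τ : Equiv.Perm (Fin n)) (i : Fin n) : Prop :=
  (τ⁻¹ i < i ∧ ((τ i : ℕ) + 1 = (i : ℕ)) ∧ i < τ (τ i)) ∨
  (i < τ⁻¹ (τ⁻¹ i) ∧ ((τ⁻¹ i : ℕ) + 1 = (i : ℕ)) ∧ τ i < i)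

/-- A pyramidal tour: a Hamiltonian tour whose unique peak is the last city `n`. -/
def IsPyramidal {n : ℕ} (τ : Equiv.Perm (Fin n)) : Prop :=
  IsTour τ ∧ ∀ i : Fin n, IsPeak τ i ↔ (i : ℕ) = n - 1

/-- A pyramidal tour with step-backs: a Hamiltonian tour with exactly one proper peak
(a peak that is not a step-back peak), namely the last city `n`. -/
def IsPSB {n : ℕ} (τ : Equiv.Perm (Fin n)) : Prop :=
  IsTour τ ∧ ∀ i : Fin n, (IsPeak τ i ∧ ¬ IsStepBackPeak τ i) ↔ (i : ℕ) = n - 1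

/-- City `i` is visited by `τ` in ascending order (taking step-backs into account):
either the successor of `i` is larger and `i` is not the lower city of a descending
step-back, or `i` is an ascending step-back peak. -/
def Ascends {n : ℕ} (τ : Equiv.Perm (Fin n)) (i : Fin n) : Prop :=
  (i < τ i ∧ ¬ (((i : ℕ) + 1 = (τ i : ℕ)) ∧ τ (τ i) < τ i ∧ τ i < τ⁻¹ i)) ∨
  (τ⁻¹ i < i ∧ ((τ i : ℕ) + 1 = (i : ℕ)) ∧ i < τ (τ i))

/-- The city represented by the element of `Fin n` with value `m` is visited ascending. -/
def AscAt {n : ℕ} (τ : Equiv.Perm (Fin n)) (m : ℕ) : Prop :=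
  ∃ i : Fin n, (i : ℕ) = m ∧ Ascends τ i

/-- The city represented by the element of `Fin n` with value `m` is a step-back peak. -/
def SBPeakAt {n : ℕ} (τ : Equiv.Perm (Fin n)) (m : ℕ) : Prop :=
  ∃ i : Fin n, (i : ℕ) = m ∧ IsStepBackPeak τ i

/-- The pyramidal encodings of `x` and `y` have the same value at coordinate `m`. -/
def SameEnc {n : ℕ} (x y : Equiv.Perm (Fin n)) (m : ℕ) : Prop :=
  (AscAt x m ↔ AscAt y m) ∧ (SBPeakAt x m ↔ SBPeakAt y m)

/-- The pyramidal encodings of `x` and `y` agree on the pair of neighboring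
coordinates `(k, k+1)`, including the step-back marks overlapping the pair. -/
def SamePair {n : ℕ} (x y : Equiv.Perm (Fin n)) (k : ℕ) : Prop :=
  SameEnc x y k ∧ SameEnc x y (k + 1) ∧ (SBPeakAt x (k + 2) ↔ SBPeakAt y (k + 2))

/-- Characteristic vector of a tour, in `ℝ^E` with `E = Fin n × Fin n`. -/
def chv {n : ℕ} (τ : Equiv.Perm (Fin n)) : Fin n × Fin n → ℝ :=
  fun e => if τ e.1 = e.2 then 1 else 0

/-- The vertices of the polytope `PSB(n)`: characteristic vectors of all
pyramidal tours with step-backs. -/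
def PSBvertices (n : ℕ) : Set (Fin n × Fin n → ℝ) :=
  chv '' {τ : Equiv.Perm (Fin n) | IsPSB τ}

/-- `u` and `w` are adjacent vertices in the 1-skeleton of the polytope `conv S`:
the segment `[u,w]` is a one-dimensional face (an extreme subset) of the polytope. -/
def AdjacentIn {n : ℕ} (S : Set (Fin n × Fin n → ℝ)) (u w : Fin n × Fin n → ℝ) : Prop :=
  u ≠ w ∧ IsExtreme ℝ (convexHull ℝ S) (segment ℝ u w)

/-- City `i` is part of a step-back of `x`: it is a step-back peak, or the next city is. -/
def PartOfStepBack {n : ℕ} (x : Equiv.Perm (Fin n)) (i : Fin n) : Prop :=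
  IsStepBackPeak x i ∨ SBPeakAt x ((i : ℕ) + 1)

def IsVl {n : ℕ} (τ : Equiv.Perm (Fin n)) (i : Fin n) : Prop :=
  i < τ⁻¹ i ∧ i < τ i

open Finset
namespace PSBaux

open scoped Classical

variable {n : ℕ} (σ : Equiv.Perm (Fin n))

/-- up-crossings of the cut between `k` and `k+1`. -/
noncomputable def uX (k : ℕ) : Finset (Fin n) :=
  univ.filter (fun i => (i : ℕ) ≤ k ∧ k < (σ i : ℕ))

/-- down-crossings. -/
noncomputable def dX (k : ℕ) : Finset (Fin n) :=
  univ.filter (fun i => (σ i : ℕ) ≤ k ∧ k < (i : ℕ))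

noncomputable def pkLe (k : ℕ) : Finset (Fin n) :=
  univ.filter (fun i => IsPeak σ i ∧ (i : ℕ) ≤ k)

noncomputable def vlLe (k : ℕ) : Finset (Fin n) :=
  univ.filter (fun i => IsVl σ i ∧ (i : ℕ) ≤ k)

lemma mem_uX {k : ℕ} {i : Fin n} : i ∈ uX σ k ↔ (i : ℕ) ≤ k ∧ k < (σ i : ℕ) := by
  simp [uX]

lemma inv_apply_ne_self_iff (i : Fin n) : σ⁻¹ i = i ↔ σ i = i := by
  constructor
  · intro hc; conv_lhs => rw [← hc]
    simp
  · intro hc; conv_lhs => rw [← hc]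
    simp

/-- the fundamental recurrence, packaged additively. -/
lemma step_identity (k : ℕ) (c : Fin n) (hck : (c : ℕ) = k + 1) :
    (uX σ (k+1)).card + (if (σ⁻¹ c : ℕ) ≤ k then 1 else 0)
      = (uX σ k).card + (if c < σ c then 1 else 0) := by
  classical
  have h1 : uX σ (k+1) = (univ.filter (fun i : Fin n => (i:ℕ) ≤ k ∧ k+1 < (σ i : ℕ))) ∪
      (univ.filter (fun i : Fin n => i = c ∧ k+1 < (σ i : ℕ))) := by
    ext i
    simp only [uX, mem_filter, mem_univ, true_and, mem_union]
    constructor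
    · rintro ⟨h₁, h₂⟩
      rcases Nat.lt_or_ge (i : ℕ) (k+1) with h | h
      · exact Or.inl ⟨Nat.lt_succ_iff.mp h, h₂⟩
      · exact Or.inr ⟨Fin.ext (by omega), h₂⟩
    · rintro (⟨h₁, h₂⟩ | ⟨h₁, h₂⟩)
      · exact ⟨by omega, h₂⟩
      · subst h₁; exact ⟨by omega, h₂⟩
  have h2 : uX σ k = (univ.filter (fun i : Fin n => (i:ℕ) ≤ k ∧ k+1 < (σ i : ℕ))) ∪
      (univ.filter (fun i : Fin n => (i:ℕ) ≤ k ∧ σ i = c)) := by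
    ext i
    simp only [uX, mem_filter, mem_univ, true_and, mem_union]
    constructor
    · rintro ⟨h₁, h₂⟩
      rcases Nat.lt_or_ge (k+1) ((σ i : ℕ)) with h | h
      · exact Or.inl ⟨h₁, h⟩
      · exact Or.inr ⟨h₁, Fin.ext (by omega)⟩
    · rintro (⟨h₁, h₂⟩ | ⟨h₁, h₂⟩)
      · exact ⟨h₁, by omega⟩
      · refine ⟨h₁, ?_⟩
        rw [h₂]; omega
  have d1 : Disjoint (univ.filter (fun i : Fin n => (i:ℕ) ≤ k ∧ k+1 < (σ i : ℕ)))
      (univ.filter (fun i : Fin n => i = c ∧ k+1 < (σ i : ℕ))) := by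
    rw [Finset.disjoint_left]
    rintro i hi hi'
    simp only [mem_filter, mem_univ, true_and] at hi hi'
    rcases hi' with ⟨rfl, _⟩
    omega
  have d2 : Disjoint (univ.filter (fun i : Fin n => (i:ℕ) ≤ k ∧ k+1 < (σ i : ℕ)))
      (univ.filter (fun i : Fin n => (i:ℕ) ≤ k ∧ σ i = c)) := by
    rw [Finset.disjoint_left]
    rintro i hi hi'
    simp only [mem_filter, mem_univ, true_and] at hi hi'
    rw [hi'.2] at hi
    omega
  have c1 : (univ.filter (fun i : Fin n => i = c ∧ k+1 < (σ i : ℕ))).card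
      = if c < σ c then 1 else 0 := by
    by_cases h : c < σ c
    · rw [if_pos h]
      rw [show (univ.filter (fun i : Fin n => i = c ∧ k+1 < (σ i : ℕ))) = {c} from ?_]
      · simp
      · ext i
        simp only [mem_filter, mem_univ, true_and, mem_singleton]
        constructor
        · rintro ⟨h1, _⟩; exact h1
        · rintro rfl
          have := Fin.lt_def.mp h
          exact ⟨rfl, by omega⟩
    · rw [if_neg h]
      rw [Finset.card_eq_zero, Finset.filter_eq_empty_iff]
      rintro i _ ⟨rfl, hlt⟩
      exact h (Fin.lt_def.mpr (by omega))
  have c2 : (univ.filter (fun i : Fin n => (i:ℕ) ≤ k ∧ σ i = c)).card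
      = if (σ⁻¹ c : ℕ) ≤ k then 1 else 0 := by
    by_cases h : (σ⁻¹ c : ℕ) ≤ k
    · rw [if_pos h]
      rw [show (univ.filter (fun i : Fin n => (i:ℕ) ≤ k ∧ σ i = c)) = {σ⁻¹ c} from ?_]
      · simp
      · ext i
        simp only [mem_filter, mem_univ, true_and, mem_singleton]
        constructor
        · rintro ⟨_, h2⟩
          rw [← h2]; simp
        · rintro rfl
          exact ⟨h, by simp⟩
    · rw [if_neg h]
      rw [Finset.card_eq_zero, Finset.filter_eq_empty_iff]
      rintro i _ ⟨hle, hoc⟩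
      apply h
      rw [← hoc]
      simpa using hle
  rw [h1, h2, Finset.card_union_of_disjoint d1, Finset.card_union_of_disjoint d2, c1, c2]
  ring

lemma le_step (p : Fin n → Prop) (k : ℕ) (c : Fin n) (hck : (c : ℕ) = k + 1) :
    (univ.filter (fun i : Fin n => p i ∧ (i:ℕ) ≤ k+1)).card
      = (univ.filter (fun i : Fin n => p i ∧ (i:ℕ) ≤ k)).card + (if p c then 1 else 0) := by
  classical
  have h : (univ.filter (fun i : Fin n => p i ∧ (i:ℕ) ≤ k+1))
      = (univ.filter (fun i : Fin n => p i ∧ (i:ℕ) ≤ k)) ∪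
        (univ.filter (fun i : Fin n => p i ∧ i = c)) := by
    ext i
    simp only [mem_filter, mem_univ, true_and, mem_union]
    constructor
    · rintro ⟨hp, hle⟩
      rcases Nat.lt_or_ge (i:ℕ) (k+1) with h | h
      · exact Or.inl ⟨hp, by omega⟩
      · exact Or.inr ⟨hp, Fin.ext (by omega)⟩
    · rintro (⟨hp, hle⟩ | ⟨hp, rfl⟩)
      · exact ⟨hp, by omega⟩
      · exact ⟨hp, by omega⟩
  have hd : Disjoint (univ.filter (fun i : Fin n => p i ∧ (i:ℕ) ≤ k))
      (univ.filter (fun i : Fin n => p i ∧ i = c)) := by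
    rw [Finset.disjoint_left]
    rintro i hi hi'
    simp only [mem_filter, mem_univ, true_and] at hi hi'
    rcases hi' with ⟨_, rfl⟩
    omega
  have hc : (univ.filter (fun i : Fin n => p i ∧ i = c)).card = if p c then 1 else 0 := by
    by_cases h : p c
    · rw [if_pos h, show (univ.filter (fun i : Fin n => p i ∧ i = c)) = {c} from ?_]
      · simp
      · ext i
        simp only [mem_filter, mem_univ, true_and, mem_singleton]
        exact ⟨fun h => h.2, fun h => ⟨h ▸ ‹p c›, h⟩⟩
    · rw [if_neg h, Finset.card_eq_zero, Finset.filter_eq_empty_iff]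
      rintro i _ ⟨hp, rfl⟩
      exact h hp
  rw [h, Finset.card_union_of_disjoint hd, hc]

lemma fixpt_iff (i : Fin n) : σ i = i ↔ σ⁻¹ i = i :=
  ((inv_apply_ne_self_iff σ i)).symm

lemma combo (k : ℕ) (c : Fin n) (hck : (c : ℕ) = k + 1) :
    (if c < σ c then 1 else 0) + (if IsPeak σ c then 1 else 0)
      = (if (σ⁻¹ c : ℕ) ≤ k then 1 else 0) + (if IsVl σ c then 1 else 0) := by
  have hinv : ((σ⁻¹ c : ℕ) ≤ k) ↔ σ⁻¹ c < c := by
    rw [Fin.lt_def]; omega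
  have hfix := fixpt_iff σ c
  rcases lt_trichotomy (σ c) c with h1 | h1 | h1
  · -- σ c < c
    have h2 : σ⁻¹ c ≠ c := fun hc => (h1.ne (hfix.mpr hc))
    rcases lt_or_gt_of_ne h2 with h3 | h3
    · -- peak
      rw [if_neg (not_lt.mpr h1.le), if_pos ⟨h3, h1⟩, if_pos (hinv.mpr h3),
        if_neg (fun hv : IsVl σ c => absurd hv.2 (not_lt.mpr h1.le))]
    · rw [if_neg (not_lt.mpr h1.le), if_neg (fun hp : IsPeak σ c => absurd hp.1 (not_lt.mpr h3.le)),
        if_neg (fun h => absurd (hinv.mp h) (not_lt.mpr h3.le)),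
        if_neg (fun hv : IsVl σ c => absurd hv.2 (not_lt.mpr h1.le))]
  · -- fixed point
    have h2 : σ⁻¹ c = c := hfix.mp h1
    rw [if_neg (by rw [h1]; exact lt_irrefl _), if_neg (fun hp : IsPeak σ c => absurd (h1 ▸ hp.2) (lt_irrefl _)),
      if_neg (by rw [h2, hck]; omega), if_neg (fun hv : IsVl σ c => absurd (h1 ▸ hv.2) (lt_irrefl _))]
  · -- σ c > c
    have h2 : σ⁻¹ c ≠ c := fun hc => (h1.ne' (hfix.mpr hc))
    rcases lt_or_gt_of_ne h2 with h3 | h3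
    · rw [if_pos h1, if_neg (fun hp : IsPeak σ c => absurd hp.2 (not_lt.mpr h1.le)),
        if_pos (hinv.mpr h3), if_neg (fun hv : IsVl σ c => absurd hv.1 (not_lt.mpr h3.le))]
    · rw [if_pos h1, if_neg (fun hp : IsPeak σ c => absurd hp.2 (not_lt.mpr h1.le)),
        if_neg (fun h => absurd (hinv.mp h) (not_lt.mpr h3.le)), if_pos ⟨h3, h1⟩]

/-- A1 : up-crossing count + peaks below = valleys below. -/
lemma crossing_count : ∀ k, k < n →
    (uX σ k).card + (pkLe σ k).card = (vlLe σ k).card := by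
  intro k
  induction k with
  | zero =>
    intro hk
    set c : Fin n := ⟨0, hk⟩ with hc
    have hzero : ((⟨0, hk⟩ : Fin n) : ℕ) = 0 := rfl
    have hbot : ∀ j : Fin n, c ≤ j := fun j => by
      rw [Fin.le_def]; omega
    have h1 : uX σ 0 = if c < σ c then {c} else ∅ := by
      ext i
      simp only [uX, mem_filter, mem_univ, true_and]
      by_cases h : c < σ c
      · rw [if_pos h]
        simp only [mem_singleton]
        constructor
        · rintro ⟨h1, h2⟩
          exact Fin.ext (by omega)
        · rintro rfl
          have := Fin.lt_def.mp h
          constructor <;> omega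
      · rw [if_neg h]
        simp only [Finset.notMem_empty, iff_false]
        rintro ⟨h1, h2⟩
        have : i = c := Fin.ext (by omega)
        subst this
        exact h (Fin.lt_def.mpr (by omega))
    have h2 : pkLe σ 0 = ∅ := by
      rw [Finset.eq_empty_iff_forall_notMem]
      intro i hi
      simp only [pkLe, mem_filter, mem_univ, true_and] at hi
      rcases hi with ⟨⟨hp1, _⟩, hle⟩
      have : i = c := Fin.ext (by omega)
      subst this
      exact absurd hp1 (not_lt.mpr (hbot _))
    have h3 : vlLe σ 0 = if c < σ c then {c} else ∅ := by
      ext i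
      simp only [vlLe, mem_filter, mem_univ, true_and]
      by_cases h : c < σ c
      · rw [if_pos h]
        simp only [mem_singleton]
        constructor
        · rintro ⟨_, hle⟩
          exact Fin.ext (by omega)
        · rintro rfl
          refine ⟨⟨?_, h⟩, by omega⟩
          rcases (hbot (σ⁻¹ c)).lt_or_eq with h' | h'
          · exact h'
          · exact absurd ((fixpt_iff σ c).mpr h'.symm) (by intro hh; rw [hh] at h; exact lt_irrefl _ h)
      · rw [if_neg h]
        simp only [Finset.notMem_empty, iff_false]
        rintro ⟨⟨_, hv2⟩, hle⟩
        have : i = c := Fin.ext (by omega)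
        subst this
        exact h hv2
    rw [h1, h2, h3]
    try simp
  | succ k ih =>
    intro hk
    have hk' : k < n := by omega
    set c : Fin n := ⟨k+1, hk⟩ with hc
    have hck : (c : ℕ) = k + 1 := rfl
    have e1 := step_identity σ k c hck
    have e2 : (pkLe σ (k+1)).card = (pkLe σ k).card + (if IsPeak σ c then 1 else 0) :=
      le_step (fun i => IsPeak σ i) k c hck
    have e3 : (vlLe σ (k+1)).card = (vlLe σ k).card + (if IsVl σ c then 1 else 0) :=
      le_step (fun i => IsVl σ i) k c hck
    have e4 := combo σ k c hck
    have e5 := ih hk'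
    simp only [pkLe, vlLe] at e2 e3 e5 ⊢
    omega

/-- cardinality of an initial segment of `Fin n`. -/
lemma card_le_cut (k : ℕ) (hk : k < n) :
    (univ.filter (fun i : Fin n => (i:ℕ) ≤ k)).card = k + 1 := by
  classical
  have : (univ.filter (fun i : Fin n => (i:ℕ) ≤ k)) = Finset.Iic (⟨k, hk⟩ : Fin n) := by
    ext i
    simp [Fin.le_def]
  rw [this, Fin.card_Iic]

lemma card_le_cut_img (k : ℕ) (hk : k < n) :
    (univ.filter (fun i : Fin n => (σ i : ℕ) ≤ k)).card = k + 1 := by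
  classical
  have : (univ.filter (fun i : Fin n => (σ i : ℕ) ≤ k))
      = (univ.filter (fun j : Fin n => (j:ℕ) ≤ k)).map σ.symm.toEmbedding := by
    ext i
    simp only [mem_filter, mem_univ, true_and, Finset.mem_map_equiv, Equiv.symm_symm]
    try rfl
  rw [this, Finset.card_map, card_le_cut k hk]

/-- A2 : down-crossings = up-crossings. -/
lemma down_eq_up (k : ℕ) (hk : k < n) : (dX σ k).card = (uX σ k).card := by
  classical
  have h1 : (uX σ k).card + (univ.filter (fun i : Fin n => (i:ℕ) ≤ k ∧ (σ i : ℕ) ≤ k)).card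
      = k + 1 := by
    rw [← card_le_cut k hk]
    rw [show (univ.filter (fun i : Fin n => (i:ℕ) ≤ k)) =
      uX σ k ∪ (univ.filter (fun i : Fin n => (i:ℕ) ≤ k ∧ (σ i : ℕ) ≤ k)) from ?_]
    · apply (Finset.card_union_of_disjoint _).symm
      rw [Finset.disjoint_left]
      rintro i hi hi'
      simp only [uX, mem_filter, mem_univ, true_and] at hi hi'
      omega
    · ext i
      simp only [uX, mem_filter, mem_univ, true_and, mem_union]
      constructor
      · intro h
        rcases Nat.lt_or_ge k ((σ i : ℕ)) with h' | h'
        · exact Or.inl ⟨h, h'⟩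
        · exact Or.inr ⟨h, h'⟩
      · rintro (⟨h, _⟩ | ⟨h, _⟩) <;> exact h
  have h2 : (dX σ k).card + (univ.filter (fun i : Fin n => (i:ℕ) ≤ k ∧ (σ i : ℕ) ≤ k)).card
      = k + 1 := by
    rw [← card_le_cut_img σ k hk]
    rw [show (univ.filter (fun i : Fin n => (σ i :ℕ) ≤ k)) =
      dX σ k ∪ (univ.filter (fun i : Fin n => (i:ℕ) ≤ k ∧ (σ i : ℕ) ≤ k)) from ?_]
    · apply (Finset.card_union_of_disjoint _).symm
      rw [Finset.disjoint_left]
      rintro i hi hi'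
      simp only [dX, mem_filter, mem_univ, true_and] at hi hi'
      omega
    · ext i
      simp only [dX, mem_filter, mem_univ, true_and, mem_union]
      constructor
      · intro h
        rcases Nat.lt_or_ge k ((i : ℕ)) with h' | h'
        · exact Or.inl ⟨h, h'⟩
        · exact Or.inr ⟨h', h⟩
      · rintro (⟨h, _⟩ | ⟨_, h⟩) <;> exact h
  omega

section structural

variable {n : ℕ} {σ : Equiv.Perm (Fin n)}

lemma pow_fix {i : Fin n} (hfix : σ i = i) : ∀ k, (σ^k) i = i := by
  intro k
  induction k with
  | zero => simp
  | succ k ih =>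
    rw [pow_succ, Equiv.Perm.mul_apply, hfix, ih]

lemma tour_ne (ht : IsTour σ) (hn : 2 ≤ n) (i : Fin n) : σ i ≠ i := by
  intro hfix
  -- find j ≠ i
  have h0 : (0 : ℕ) < n := by omega
  have h1 : (1 : ℕ) < n := by omega
  have : ∃ j : Fin n, j ≠ i := by
    by_cases h : (⟨0, h0⟩ : Fin n) = i
    · exact ⟨⟨1, h1⟩, fun hc => by rw [← h] at hc; exact absurd (Fin.val_eq_of_eq hc) (by simp)⟩
    · exact ⟨⟨0, h0⟩, h⟩
  obtain ⟨j, hj⟩ := this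
  obtain ⟨k, hk⟩ := ht i j
  rw [pow_fix hfix] at hk
  exact hj hk.symm

lemma tour_inv_ne (ht : IsTour σ) (hn : 2 ≤ n) (i : Fin n) : σ⁻¹ i ≠ i := by
  intro hfix
  exact tour_ne ht hn i ((fixpt_iff σ i).mpr hfix)

lemma sb_peak {i : Fin n} (h : IsStepBackPeak σ i) : IsPeak σ i := by
  rcases h with ⟨h1, h2, h3⟩ | ⟨h1, h2, h3⟩
  · exact ⟨h1, Fin.lt_def.mpr (by omega)⟩
  · exact ⟨Fin.lt_def.mpr (by omega), h3⟩

lemma sb_ge_two {i : Fin n} (h : IsStepBackPeak σ i) : 2 ≤ (i : ℕ) := by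
  by_contra hlt
  push_neg at hlt
  rcases h with ⟨h1, h2, h3⟩ | ⟨h1, h2, h3⟩
  · have hi1 : (i : ℕ) = 1 := by omega
    have hs : (σ i : ℕ) = 0 := by omega
    have hinv : (σ⁻¹ i : ℕ) = 0 := by
      have := Fin.lt_def.mp h1; omega
    have : σ⁻¹ i = σ i := Fin.ext (by omega)
    have : σ (σ i) = i := by rw [← this]; simp
    rw [this] at h3
    exact lt_irrefl _ h3
  · have hi1 : (i : ℕ) = 1 := by omega
    have hinv : (σ⁻¹ i : ℕ) = 0 := by omega
    have hs : (σ i : ℕ) = 0 := by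
      have := Fin.lt_def.mp h3; omega
    have heq : σ⁻¹ i = σ i := Fin.ext (by omega)
    have : σ⁻¹ (σ⁻¹ i) = i := by rw [heq]; simp
    rw [this] at h1
    exact lt_irrefl _ h1

lemma sb_top_lt {i : Fin n} (hn : 1 ≤ n) (h : IsStepBackPeak σ i) : (i : ℕ) < n - 1 := by
  by_contra hlt
  push_neg at hlt
  have htop : (i : ℕ) = n - 1 := by have := i.isLt; omega
  have hmax : ∀ j : Fin n, j ≤ i := fun j => Fin.le_def.mpr (by have := j.isLt; omega)
  rcases h with ⟨h1, h2, h3⟩ | ⟨h1, h2, h3⟩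
  · exact absurd h3 (not_lt.mpr (hmax _))
  · exact absurd h1 (not_lt.mpr (hmax _))

/-- the top city is a peak and peaks are exactly SB peaks plus top, for a PSB tour. -/
lemma psb_peak_iff (hps : ∀ i : Fin n, (IsPeak σ i ∧ ¬ IsStepBackPeak σ i) ↔ (i : ℕ) = n - 1)
    {i : Fin n} : IsPeak σ i ↔ ((i : ℕ) = n - 1 ∨ IsStepBackPeak σ i) := by
  constructor
  · intro hp
    by_cases hs : IsStepBackPeak σ i
    · exact Or.inr hs
    · exact Or.inl ((hps i).mp ⟨hp, hs⟩)
  · rintro (h | h)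
    · exact ((hps i).mpr h).1
    · exact sb_peak h

section counting_psb

variable (hn : 4 ≤ n) (ht : IsTour σ)
  (hps : ∀ i : Fin n, (IsPeak σ i ∧ ¬ IsStepBackPeak σ i) ↔ (i : ℕ) = n - 1)

include hn ht hps

lemma bot_vl : IsVl σ ⟨0, by omega⟩ := by
  set z : Fin n := ⟨0, by omega⟩ with hzdef
  have hz : (z : ℕ) = 0 := rfl
  constructor
  · have h1 : σ⁻¹ z ≠ z := tour_inv_ne ht (by omega) z
    have h2 : (σ⁻¹ z : ℕ) ≠ 0 := fun hc => h1 (Fin.ext (by omega))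
    exact Fin.lt_def.mpr (by omega)
  · have h1 : σ z ≠ z := tour_ne ht (by omega) z
    have h2 : (σ z : ℕ) ≠ 0 := fun hc => h1 (Fin.ext (by omega))
    exact Fin.lt_def.mpr (by omega)

omit hn ht hps in
lemma sb_pred_vl {p w : Fin n} (hsb : IsStepBackPeak σ p) (hw : (w : ℕ) + 1 = (p : ℕ)) :
    IsVl σ w := by
  have hwp : w < p := Fin.lt_def.mpr (by omega)
  rcases hsb with ⟨h1, h2, h3⟩ | ⟨h1, h2, h3⟩
  · have hw' : σ p = w := Fin.ext (by omega)
    have hinv : σ⁻¹ w = p := by rw [← hw']; simp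
    have hfwd : σ w = σ (σ p) := by rw [hw']
    constructor
    · rw [hinv]; exact hwp
    · rw [hfwd]; exact lt_trans hwp h3
  · have hw' : σ⁻¹ p = w := Fin.ext (by omega)
    have hfwd : σ w = p := by rw [← hw']; simp
    have hinv : σ⁻¹ w = σ⁻¹ (σ⁻¹ p) := by rw [hw']
    constructor
    · rw [hinv]; exact lt_trans hwp h1
    · rw [hfwd]; exact hwp

/-- valley characterization for PSB tours. -/
lemma psb_vl_char {v : Fin n} (hv : IsVl σ v) :
    (v : ℕ) = 0 ∨ ∃ p : Fin n, IsStepBackPeak σ p ∧ (v : ℕ) + 1 = (p : ℕ) := by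
  classical
  have hglob := crossing_count σ (n-1) (by omega)
  have hux : uX σ (n-1) = ∅ := by
    rw [Finset.eq_empty_iff_forall_notMem]
    intro i hi
    rw [mem_uX] at hi
    have := (σ i).isLt
    omega
  have hpk : pkLe σ (n-1) = univ.filter (fun i => IsPeak σ i) := by
    apply Finset.filter_congr
    intro i _
    exact and_iff_left (show (i:ℕ) ≤ n-1 by have := i.isLt; omega)
  have hvl : vlLe σ (n-1) = univ.filter (fun i => IsVl σ i) := by
    apply Finset.filter_congr
    intro i _
    exact and_iff_left (show (i:ℕ) ≤ n-1 by have := i.isLt; omega)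
  rw [hux, hpk, hvl] at hglob
  simp only [Finset.card_empty, zero_add] at hglob
  set SBf : Finset (Fin n) := univ.filter (fun i => IsStepBackPeak σ i) with hSBf
  set Tt : Fin n := ⟨n-1, by omega⟩ with hT
  have hpkeq : univ.filter (fun i => IsPeak σ i) = insert Tt SBf := by
    ext i
    simp only [mem_filter, mem_univ, true_and, Finset.mem_insert, hSBf]
    rw [psb_peak_iff hps]
    constructor
    · rintro (h | h)
      · exact Or.inl (Fin.ext h)
      · exact Or.inr h
    · rintro (rfl | h)
      · exact Or.inl rfl
      · exact Or.inr h
  have hTnotSB : Tt ∉ SBf := by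
    simp only [hSBf, mem_filter, mem_univ, true_and]
    intro h
    have h2 := sb_top_lt (σ := σ) (by omega) h
    have h3 : (Tt : ℕ) = n - 1 := rfl
    omega
  set pd : Fin n → Fin n := fun p => ⟨(p:ℕ) - 1, by have := p.isLt; omega⟩ with hpd
  have hpdval : ∀ p : Fin n, ((pd p : ℕ)) = (p:ℕ) - 1 := fun p => rfl
  set Vc : Finset (Fin n) := insert ⟨0, by omega⟩ (SBf.image pd) with hVc
  have hsub : Vc ⊆ univ.filter (fun i => IsVl σ i) := by
    intro v hvv
    simp only [hVc, Finset.mem_insert, Finset.mem_image] at hvv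
    simp only [mem_filter, mem_univ, true_and]
    rcases hvv with rfl | ⟨p, hp, rfl⟩
    · exact bot_vl hn ht hps
    · simp only [hSBf, mem_filter, mem_univ, true_and] at hp
      exact sb_pred_vl hp (by rw [hpdval]; have := sb_ge_two hp; omega)
  have himg_card : (SBf.image pd).card = SBf.card := by
    apply Finset.card_image_of_injOn
    intro p hp q hq hpq
    simp only [hSBf, Finset.mem_coe, mem_filter, mem_univ, true_and] at hp hq
    have hvv := Fin.val_eq_of_eq hpq
    rw [hpdval, hpdval] at hvv
    have := sb_ge_two hp
    have := sb_ge_two hq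
    exact Fin.ext (by omega)
  have h0notin : (⟨0, by omega⟩ : Fin n) ∉ SBf.image pd := by
    simp only [Finset.mem_image]
    rintro ⟨p, hp, hpq⟩
    simp only [hSBf, Finset.mem_coe, mem_filter, mem_univ, true_and] at hp
    have hvv := Fin.val_eq_of_eq hpq
    rw [hpdval] at hvv
    have := sb_ge_two hp
    simp at hvv
    omega
  have hVccard : Vc.card = SBf.card + 1 := by
    rw [hVc, Finset.card_insert_of_notMem h0notin, himg_card]
  have hpkcard : (univ.filter (fun i => IsPeak σ i)).card = SBf.card + 1 := by
    rw [hpkeq, Finset.card_insert_of_notMem hTnotSB]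
  have hVeq : univ.filter (fun i => IsVl σ i) = Vc := by
    apply (Finset.eq_of_subset_of_card_le hsub _).symm
    rw [← hglob, hpkcard, hVccard]
  have hvmem : v ∈ Vc := by
    rw [← hVeq]
    simp only [mem_filter, mem_univ, true_and]
    exact hv
  simp only [hVc, Finset.mem_insert, Finset.mem_image] at hvmem
  rcases hvmem with rfl | ⟨p, hp, rfl⟩
  · left; rfl
  · simp only [hSBf, mem_filter, mem_univ, true_and] at hp
    right
    refine ⟨p, hp, ?_⟩
    rw [hpdval]
    have := sb_ge_two hp
    omega

end counting_psb

end structural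

section canonical

variable {n : ℕ} {σ : Equiv.Perm (Fin n)}
variable (hn : 4 ≤ n) (ht : IsTour σ)
  (hpkc : ∀ i : Fin n, IsPeak σ i → (i : ℕ) = n - 1)
  (hvlc : ∀ i : Fin n, IsVl σ i → (i : ℕ) = 0)

include hn ht hpkc hvlc

lemma uX_one (k : ℕ) (hk : k < n - 1) : (uX σ k).card = 1 := by
  have hcc := crossing_count σ k (by omega)
  have hpk : pkLe σ k = ∅ := by
    rw [Finset.eq_empty_iff_forall_notMem]
    intro i hi
    simp only [pkLe, mem_filter, mem_univ, true_and] at hi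
    have := hpkc i hi.1
    omega
  have hbot : IsVl σ ⟨0, by omega⟩ := by
    constructor
    · have h1 : σ⁻¹ ⟨0, by omega⟩ ≠ ⟨0, by omega⟩ := tour_inv_ne ht (by omega) _
      have h2 : ((σ⁻¹ ⟨0, by omega⟩ : Fin n) : ℕ) ≠ 0 := fun hc => h1 (Fin.ext hc)
      exact Fin.lt_def.mpr (Nat.pos_of_ne_zero h2)
    · have h1 : σ ⟨0, by omega⟩ ≠ ⟨0, by omega⟩ := tour_ne ht (by omega) _
      have h2 : ((σ ⟨0, by omega⟩ : Fin n) : ℕ) ≠ 0 := fun hc => h1 (Fin.ext hc)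
      exact Fin.lt_def.mpr (by simp; omega)
  have hvl : vlLe σ k = {⟨0, by omega⟩} := by
    ext v
    simp only [vlLe, mem_filter, mem_univ, true_and, mem_singleton]
    constructor
    · rintro ⟨hv, _⟩
      exact Fin.ext (hvlc v hv)
    · rintro rfl
      exact ⟨hbot, by simp⟩
  rw [hpk, hvl] at hcc
  simpa using hcc

lemma dX_one (k : ℕ) (hk : k < n - 1) : (dX σ k).card = 1 := by
  rw [down_eq_up σ k (by omega)]
  exact uX_one hn ht hpkc hvlc k hk

lemma asc_next {i c : Fin n} (ha : i < σ i) (hic : i < c) (hcs : c < σ i) : σ c < c := by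
  by_contra hcc
  push_neg at hcc
  have hne : σ c ≠ c := tour_ne ht (by omega) c
  have hcc' : c < σ c := lt_of_le_of_ne hcc (Ne.symm hne)
  have hk : (c : ℕ) < n - 1 := by
    have h1 := Fin.lt_def.mp hcs
    have h2 := (σ i).isLt
    omega
  have hcard := uX_one hn ht hpkc hvlc (c : ℕ) hk
  have hsub : ({i, c} : Finset (Fin n)) ⊆ uX σ (c : ℕ) := by
    intro j hj
    simp only [Finset.mem_insert, Finset.mem_singleton] at hj
    rw [mem_uX]
    rcases hj with rfl | rfl
    · exact ⟨le_of_lt (Fin.lt_def.mp hic), Fin.lt_def.mp hcs⟩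
    · exact ⟨le_refl _, Fin.lt_def.mp hcc'⟩
  have := Finset.card_le_card hsub
  rw [Finset.card_pair (ne_of_lt hic)] at this
  omega

lemma desc_next {i c : Fin n} (hd : σ i < i) (hsc : σ i < c) (hci : c < i) : c < σ c := by
  by_contra hcc
  push_neg at hcc
  have hne : σ c ≠ c := tour_ne ht (by omega) c
  have hcc' : σ c < c := lt_of_le_of_ne hcc hne
  have hc1 : 1 ≤ (c : ℕ) := by
    have := Fin.lt_def.mp hsc
    omega
  have hk : (c : ℕ) - 1 < n - 1 := by
    have h1 := Fin.lt_def.mp hci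
    have h2 := i.isLt
    omega
  have hcard := dX_one hn ht hpkc hvlc ((c:ℕ) - 1) hk
  have hsub : ({i, c} : Finset (Fin n)) ⊆ dX σ ((c:ℕ) - 1) := by
    intro j hj
    simp only [Finset.mem_insert, Finset.mem_singleton] at hj
    simp only [dX, mem_filter, mem_univ, true_and]
    rcases hj with rfl | rfl
    · have h1 := Fin.lt_def.mp hsc
      have h2 := Fin.lt_def.mp hci
      omega
    · have h1 := Fin.lt_def.mp hcc'
      omega
  have := Finset.card_le_card hsub
  rw [Finset.card_pair (ne_of_gt hci)] at this
  omega

omit hvlc in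
lemma asc_target {i : Fin n} (ha : i < σ i) : ((σ i : ℕ) = n - 1) ∨ σ i < σ (σ i) := by
  have hinv : σ⁻¹ (σ i) < σ i := by simpa using ha
  rcases lt_trichotomy (σ (σ i)) (σ i) with h | h | h
  · exact Or.inl (hpkc _ ⟨hinv, h⟩)
  · exact absurd h (tour_ne ht (by omega) _)
  · exact Or.inr h

omit hpkc in
lemma desc_target {i : Fin n} (hd : σ i < i) : ((σ i : ℕ) = 0) ∨ σ (σ i) < σ i := by
  have hinv : σ i < σ⁻¹ (σ i) := by simpa using hd
  rcases lt_trichotomy (σ (σ i)) (σ i) with h | h | h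
  · exact Or.inr h
  · exact absurd h (tour_ne ht (by omega) _)
  · exact Or.inl (hvlc _ ⟨hinv, h⟩)

omit hpkc in
lemma asc_pred {i : Fin n} (ha : i < σ i) (h0 : 0 < (i : ℕ)) : σ⁻¹ i < i := by
  rcases lt_trichotomy (σ⁻¹ i) i with h | h | h
  · exact h
  · exact absurd h (tour_inv_ne ht (by omega) _)
  · exact absurd (hvlc i ⟨h, ha⟩) (by omega)

omit hvlc in
lemma desc_pred {i : Fin n} (hd : σ i < i) (htop : (i : ℕ) ≠ n - 1) : i < σ⁻¹ i := by
  rcases lt_trichotomy (σ⁻¹ i) i with h | h | h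
  · exact absurd (hpkc i ⟨h, hd⟩) htop
  · exact absurd h (tour_inv_ne ht (by omega) _)
  · exact h

end canonical

section main

variable {n : ℕ} {x y ρ : Equiv.Perm (Fin n)}
variable (hn : 4 ≤ n)
  (hxt : IsTour x)
  (hxps : ∀ i : Fin n, (IsPeak x i ∧ ¬ IsStepBackPeak x i) ↔ (i : ℕ) = n - 1)
  (hyt : IsTour y)
  (hypk : ∀ i : Fin n, IsPeak y i ↔ (i : ℕ) = n - 1)
  (hlink : ∀ i : Fin n, 1 ≤ (i : ℕ) → (i : ℕ) ≤ n - 2 →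
      (i < y i ↔ ¬ PartOfStepBack x i))
  (hrt : IsTour ρ)
  (hrps : ∀ i : Fin n, (IsPeak ρ i ∧ ¬ IsStepBackPeak ρ i) ↔ (i : ℕ) = n - 1)
  (hsub : ∀ i, ρ i = x i ∨ ρ i = y i)

omit hn in
lemma inv_of_eq {σ : Equiv.Perm (Fin n)} {a b : Fin n} (h : σ a = b) : σ⁻¹ b = a := by
  rw [← h]; simp

include hsub in
omit hn in
lemma sub_inv (j : Fin n) : ρ⁻¹ j = x⁻¹ j ∨ ρ⁻¹ j = y⁻¹ j := by
  rcases hsub (ρ⁻¹ j) with h | h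
  · left
    have hx : x (ρ⁻¹ j) = j := by rw [← h]; simp
    exact (inv_of_eq hx).symm
  · right
    have hy : y (ρ⁻¹ j) = j := by rw [← h]; simp
    exact (inv_of_eq hy).symm

include hypk in
lemma hyps_y : ∀ i : Fin n, (IsPeak y i ∧ ¬ IsStepBackPeak y i) ↔ (i : ℕ) = n - 1 := by
  intro i
  constructor
  · rintro ⟨hp, _⟩; exact (hypk i).mp hp
  · intro h
    refine ⟨(hypk i).mpr h, fun hsb => ?_⟩
    have := sb_top_lt (σ := y) (by omega) hsb
    omega

include hn hyt hypk in
lemma hyvlc : ∀ v : Fin n, IsVl y v → (v : ℕ) = 0 := by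
  intro v hv
  rcases psb_vl_char hn hyt (hyps_y hypk) hv with h | ⟨p, hp, _⟩
  · exact h
  · have := sb_top_lt (σ := y) (by omega) hp
    have := (hypk p).mp (sb_peak hp)
    omega

include hypk in
lemma hypkc : ∀ i : Fin n, IsPeak y i → (i : ℕ) = n - 1 := fun i h => (hypk i).mp h

omit hn in
lemma dichot {σ : Equiv.Perm (Fin n)} (ht : IsTour σ) (hn2 : 2 ≤ n) (i : Fin n) :
    i < σ i ∨ σ i < i := by
  rcases lt_trichotomy i (σ i) with h | h | h
  · exact Or.inl h
  · exact absurd h.symm (tour_ne ht hn2 i)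
  · exact Or.inr h

include hn hyt hypk in
lemma consec_desc_y {c w : Fin n} (hc : y c < c) (hw : y w < w) (hcw : (w : ℕ) + 1 = (c : ℕ)) :
    y c = w := by
  by_cases h : y c < w
  · exact absurd (desc_next hn hyt (hypkc hypk) (hyvlc hn hyt hypk) hc h
      (Fin.lt_def.mpr (by omega))) (not_lt.mpr hw.le)
  · push_neg at h
    have h1 := Fin.lt_def.mp hc
    have h2 := Fin.le_def.mp h
    exact Fin.ext (by omega)

include hn hyt hypk in
lemma consec_asc_y {w z : Fin n} (hw : w < y w) (hz : z < y z) (hwz : (w : ℕ) + 1 = (z : ℕ)) :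
    y w = z := by
  by_cases h : z < y w
  · exact absurd (asc_next hn hyt (hypkc hypk) (hyvlc hn hyt hypk) hw
      (Fin.lt_def.mpr (by omega)) h) (not_lt.mpr hz.le)
  · push_neg at h
    have h1 := Fin.lt_def.mp hw
    have h2 := Fin.le_def.mp h
    exact Fin.ext (by omega)

include hn hyt hypk in
lemma desc_inpred {c : Fin n} (hc : y c < c) (hct : (c : ℕ) ≠ n - 1) :
    c < y⁻¹ c ∧ y (y⁻¹ c) = c ∧ y (y⁻¹ c) < y⁻¹ c := by
  set s := y⁻¹ c with hs
  have hys : y s = c := by simp [hs]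
  have hne : s ≠ c := by
    intro h; rw [h] at hys
    exact tour_ne hyt (by omega) c hys
  have hslt : c < s := by
    rcases lt_trichotomy s c with h | h | h
    · exfalso
      have := asc_target hn hyt (hypkc hypk) (σ := y) (i := s) (by rw [hys]; exact h)
      rw [hys] at this
      rcases this with h' | h'
      · exact hct h'
      · exact absurd h' (not_lt.mpr hc.le)
    · exact absurd h hne
    · exact h
  exact ⟨hslt, hys, by rw [hys]; exact hslt⟩

include hn hxps hlink hyt in
lemma part_of {c : Fin n} (hc : y c < c) (hct : (c : ℕ) < n - 1) :
    IsStepBackPeak x c ∨ (∃ p : Fin n, (p : ℕ) = (c : ℕ) + 1 ∧ IsStepBackPeak x p) := by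
  have h1 : 1 ≤ (c : ℕ) := by
    have := Fin.lt_def.mp hc; omega
  have h2 : (c : ℕ) ≤ n - 2 := by omega
  have := (hlink c h1 h2)
  have hpart : PartOfStepBack x c := by
    by_contra hnp
    exact absurd (this.mpr hnp) (not_lt.mpr hc.le)
  rcases hpart with h | ⟨j, hj, hsb⟩
  · exact Or.inl h
  · exact Or.inr ⟨j, hj, hsb⟩

include hn hlink in
lemma asc_not_sb {c : Fin n} (hc : c < y c) (h1 : 1 ≤ (c : ℕ)) :
    ¬ IsStepBackPeak x c := by
  intro hsb
  have h2 : (c : ℕ) ≤ n - 2 := by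
    have := Fin.lt_def.mp hc
    have := (y c).isLt
    omega
  exact absurd (Or.inl hsb : PartOfStepBack x c) ((hlink c h1 h2).mp hc)

-- peak legality of ρ
include hrps in
lemma rho_peak_sb {i : Fin n} (hp : IsPeak ρ i) (hi : (i : ℕ) ≠ n - 1) :
    IsStepBackPeak ρ i := by
  by_contra hsb
  exact hi ((hrps i).mp ⟨hp, hsb⟩)

include hn hxt hxps hyt hypk hlink hrt hrps hsub in
lemma dpin (hT : ρ ⟨n-1, by omega⟩ = y ⟨n-1, by omega⟩) :
    ∀ c : Fin n, y c < c → ρ c = y c := by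
  have Hvlc := hyvlc hn hyt hypk
  have Hpkc := hypkc (y := y) hypk
  suffices H : ∀ m, ∀ c : Fin n, n - 1 - (c:ℕ) ≤ m → y c < c → ρ c = y c by
    exact fun c hc => H (n-1) c (by omega) hc
  intro m
  induction m with
  | zero =>
    intro c hmc hc
    have hcv : (c:ℕ) = n - 1 := by have := c.isLt; omega
    have hceq : c = ⟨n-1, by omega⟩ := Fin.ext hcv
    rw [hceq]
    exact hT
  | succ m ih =>
    intro c hmc hc
    by_cases hctop : (c:ℕ) = n - 1
    · have hceq : c = ⟨n-1, by omega⟩ := Fin.ext hctop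
      rw [hceq]
      exact hT
    have hc1 : 1 ≤ (c:ℕ) := by have := Fin.lt_def.mp hc; omega
    have hclt : (c:ℕ) < n - 1 := by have := c.isLt; omega
    have pin : ∀ c' : Fin n, c < c' → y c' < c' → ρ c' = y c' := by
      intro c' hlt hdesc
      exact ih c' (by have := Fin.lt_def.mp hlt; omega) hdesc
    obtain ⟨he1, he2, he3⟩ := desc_inpred hn hyt hypk hc hctop
    have hρe : ρ (y⁻¹ c) = c := (pin _ he1 he3).trans he2
    by_contra hne
    have hρc : ρ c = x c := by
      rcases hsub c with h | h
      · exact h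
      · exact absurd h hne
    have hxyne : x c ≠ y c := fun hxy => hne (by rw [hρc, hxy])
    rcases part_of hn hxps hyt hlink hc hclt with hsbc | ⟨p, hpv, hsbp⟩
    · -- CASE A : c itself is an SB peak of x
      have hc2 : 2 ≤ (c:ℕ) := sb_ge_two hsbc
      rcases hsbc with ⟨a1, a2, a3⟩ | ⟨d1, d2, d3⟩
      · -- A-asc : then x c = y c, contradiction
        have hwd : y (x c) < x c := by
          have hw1 : 1 ≤ ((x c : Fin n):ℕ) := by omega
          have hw2 : ((x c : Fin n):ℕ) ≤ n - 2 := by omega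
          have hnasc : ¬ (x c < y (x c)) := by
            intro hasc
            exact absurd (Or.inr ⟨c, by omega, Or.inl ⟨a1,a2,a3⟩⟩ : PartOfStepBack x (x c))
              ((hlink (x c) hw1 hw2).mp hasc)
          rcases dichot hyt (by omega) (x c) with h | h
          · exact absurd h hnasc
          · exact h
        exact hxyne (consec_desc_y hn hyt hypk hc hwd a2).symm
      · -- A-desc : the hard case, needs the "no descending jump" sub-induction
        have hwv : ((x⁻¹ c : Fin n):ℕ) + 1 = (c:ℕ) := d2
        have hwd : y (x⁻¹ c) < x⁻¹ c := by
          have hw1 : 1 ≤ ((x⁻¹ c : Fin n):ℕ) := by omega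
          have hw2 : ((x⁻¹ c : Fin n):ℕ) ≤ n - 2 := by omega
          have hnasc : ¬ (x⁻¹ c < y (x⁻¹ c)) := by
            intro hasc
            exact absurd (Or.inr ⟨c, by omega, Or.inr ⟨d1,d2,d3⟩⟩ : PartOfStepBack x (x⁻¹ c))
              ((hlink (x⁻¹ c) hw1 hw2).mp hasc)
          rcases dichot hyt (by omega) (x⁻¹ c) with h | h
          · exact absurd h hnasc
          · exact h
        have hyc : y c = x⁻¹ c := consec_desc_y hn hyt hypk hc hwd hwv
        have hρw : ρ⁻¹ (x⁻¹ c) = x⁻¹ (x⁻¹ c) := by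
          rcases sub_inv hsub (x⁻¹ c) with h | h
          · exact h
          · exfalso
            have hyw : y⁻¹ (x⁻¹ c) = c := inv_of_eq hyc
            rw [hyw] at h
            have h2 : ρ c = x⁻¹ c := by
              have := congrArg ρ h.symm
              simpa using this
            rw [hρc] at h2
            rw [h2] at hxyne
            exact hxyne hyc.symm
        have hρX : ρ (x⁻¹ (x⁻¹ c)) = x⁻¹ c := by rw [← hρw]; simp
        have hXasc : x⁻¹ (x⁻¹ c) < y (x⁻¹ (x⁻¹ c)) := by
          rcases dichot hyt (by omega) (x⁻¹ (x⁻¹ c)) with h | h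
          · exact h
          · exfalso
            have hpX := pin _ d1 h
            rw [hρX] at hpX
            have hXw : y (x⁻¹ (x⁻¹ c)) < c := by
              rw [← hpX]
              exact Fin.lt_def.mpr (by omega)
            have := desc_next hn hyt Hpkc Hvlc h hXw d1
            exact absurd this (not_lt.mpr hc.le)
        -- no-descending-jump sub-induction
        have ND : ∀ W : Fin n, c < W → W < y W → W < ρ W := by
          suffices H2 : ∀ m', ∀ W : Fin n, n - 1 - (W:ℕ) ≤ m' → c < W → W < y W → W < ρ W by
            exact fun W h1 h2 => H2 (n-1) W (by omega) h1 h2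
          intro m'
          induction m' with
          | zero =>
            intro W hWm hcW hWasc
            exfalso
            have h1 := Fin.lt_def.mp hWasc
            have h2 := (y W).isLt
            omega
          | succ m' ih2 =>
            intro W hWm hcW hWasc
            have hWtop : (W:ℕ) < n - 1 := by
              have := Fin.lt_def.mp hWasc; have := (y W).isLt; omega
            by_contra hWno
            push_neg at hWno
            have hρWlt : ρ W < W := lt_of_le_of_ne hWno (tour_ne hrt (by omega) W)
            have hrW : ρ⁻¹ W < W := by
              rcases lt_trichotomy (ρ⁻¹ W) W with h | h | h
              · exact h
              · exact absurd h (tour_inv_ne hrt (by omega) W)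
              · exfalso
                have hρr : ρ (ρ⁻¹ W) = W := by simp
                rcases dichot hyt (by omega) (ρ⁻¹ W) with hra | hrd
                · have := ih2 (ρ⁻¹ W) (by have := Fin.lt_def.mp h; omega) (lt_trans hcW h) hra
                  rw [hρr] at this
                  exact absurd this (not_lt.mpr h.le)
                · have hpinr := pin (ρ⁻¹ W) (lt_trans hcW h) hrd
                  rw [hρr] at hpinr
                  rcases desc_target hn hyt Hvlc hrd with h0 | hd2
                  · rw [← hpinr] at h0
                    have := Fin.lt_def.mp hcW
                    omega
                  · rw [← hpinr] at hd2
                    exact absurd hd2 (not_lt.mpr hWasc.le)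
            have hsbW : IsStepBackPeak ρ W := rho_peak_sb hrps ⟨hrW, hρWlt⟩ (by omega)
            rcases hsbW with ⟨s1, s2, s3⟩ | ⟨s1, s2, s3⟩
            · -- asc-SB of ρ at W
              by_cases hvc : ρ W = c
              · rw [hvc, hρc] at s3
                have h1 := Fin.lt_def.mp s3
                have h2 := Fin.lt_def.mp d3
                have h3 := Fin.lt_def.mp hcW
                omega
              · have hvgt : c < ρ W := by
                  have h3 := Fin.lt_def.mp hcW
                  have : ((ρ W : Fin n):ℕ) ≠ (c:ℕ) := fun hh => hvc (Fin.ext hh)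
                  exact Fin.lt_def.mpr (by omega)
                rcases dichot hyt (by omega) (ρ W) with hva | hvd
                · -- v ascender : x-window analysis
                  have hyv : y (ρ W) = W := consec_asc_y hn hyt hypk hva hWasc s2
                  have hρv : ρ (ρ W) = x (ρ W) := by
                    rcases hsub (ρ W) with h | h
                    · exact h
                    · exfalso; rw [h, hyv] at s3; exact lt_irrefl _ s3
                  have hxWv : x W = ρ W := by
                    rcases hsub W with h | h
                    · exact h.symm
                    · exfalso
                      rw [h] at hρWlt
                      exact absurd hWasc (not_lt.mpr hρWlt.le)
                  rcases lt_trichotomy (x⁻¹ W) W with hxb | hxb | hxb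
                  · have hsbxW : IsStepBackPeak x W := by
                      left
                      refine ⟨hxb, by rw [hxWv]; exact s2, ?_⟩
                      rw [hxWv, ← hρv]
                      exact s3
                    exact absurd hsbxW (asc_not_sb hn hlink hWasc (by have := Fin.lt_def.mp hcW; omega))
                  · exact absurd hxb (tour_inv_ne hxt (by omega) W)
                  · have hxinv : x⁻¹ (ρ W) = W := inv_of_eq hxWv
                    have hvlx : IsVl x (ρ W) := by
                      constructor
                      · rw [hxinv]
                        exact Fin.lt_def.mpr (by omega)
                      · rw [← hρv]
                        exact lt_trans (Fin.lt_def.mpr (by omega)) s3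
                    rcases psb_vl_char hn hxt hxps hvlx with h0 | ⟨p', hsbp', hp'v⟩
                    · have := Fin.lt_def.mp hvgt
                      omega
                    · have hp'W : p' = W := Fin.ext (by omega)
                      rw [hp'W] at hsbp'
                      rcases hsbp' with ⟨b1, _, _⟩ | ⟨_, b2, _⟩
                      · exact absurd b1 (not_lt.mpr hxb.le)
                      · have := Fin.lt_def.mp hxb
                        omega
                · -- v descender > c : pinned, contradiction with s3
                  have hpv := pin (ρ W) hvgt hvd
                  rw [hpv] at s3
                  have h1 := Fin.lt_def.mp s3
                  have h2 := Fin.lt_def.mp hvd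
                  omega
            · -- desc-SB of ρ at W
              have hρr2 : ρ (ρ⁻¹ W) = W := by simp
              have hρZ : ρ (ρ⁻¹ (ρ⁻¹ W)) = ρ⁻¹ W := by simp
              rcases dichot hyt (by omega) (ρ⁻¹ (ρ⁻¹ W)) with hZa | hZd
              · have := ih2 (ρ⁻¹ (ρ⁻¹ W)) (by have := Fin.lt_def.mp s1; omega)
                  (lt_trans hcW s1) hZa
                rw [hρZ] at this
                have h1 := Fin.lt_def.mp this
                have h2 := Fin.lt_def.mp s1
                omega
              · have hpZ := pin (ρ⁻¹ (ρ⁻¹ W)) (lt_trans hcW s1) hZd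
                rw [hρZ] at hpZ
                rcases desc_target hn hyt Hvlc hZd with h0 | hd2
                · rw [← hpZ] at h0
                  have := Fin.lt_def.mp hcW
                  omega
                · rw [← hpZ] at hd2
                  -- ρ⁻¹ W is a descender; compare with c
                  by_cases hrc' : ρ⁻¹ W = c
                  · rw [hrc'] at hρr2
                    rw [hρc] at hρr2
                    have h0 := Fin.val_eq_of_eq hρr2
                    have h1 := Fin.lt_def.mp d3
                    have h2 := Fin.lt_def.mp hcW
                    omega
                  · have hrgt : c < ρ⁻¹ W := by
                      have h3 := Fin.lt_def.mp hcW
                      have : ((ρ⁻¹ W : Fin n):ℕ) ≠ (c:ℕ) := fun hh => hrc' (Fin.ext hh)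
                      exact Fin.lt_def.mpr (by omega)
                    have hpr := pin (ρ⁻¹ W) hrgt hd2
                    rw [hρr2] at hpr
                    have h1 := Fin.lt_def.mp hd2
                    have h2 := Fin.val_eq_of_eq hpr
                    omega
        -- apply ND to X = x⁻¹ (x⁻¹ c)
        have := ND _ d1 hXasc
        rw [hρX] at this
        have h1 := Fin.lt_def.mp this
        omega
    · -- CASE B : c + 1 = p is an SB peak of x
      have hp2 : 2 ≤ (p:ℕ) := sb_ge_two hsbp
      have hptop : (p:ℕ) < n - 1 := sb_top_lt (by omega) hsbp
      have hcp : c < p := Fin.lt_def.mpr (by omega)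
      have hpd : y p < p := by
        have hnasc : ¬ (p < y p) := by
          intro hasc
          exact absurd (Or.inl hsbp : PartOfStepBack x p)
            ((hlink p (by omega) (by omega)).mp hasc)
        rcases dichot hyt (by omega) p with h | h
        · exact absurd h hnasc
        · exact h
      have hyp : y p = c := consec_desc_y hn hyt hypk hpd hc (by omega)
      have hρp : ρ p = c := (pin p hcp hpd).trans hyp
      rcases hsbp with ⟨a1, a2, a3⟩ | ⟨d1, d2, d3⟩
      · -- B-asc
        have hxpc : x p = c := Fin.ext (by omega)
        rw [hxpc] at a3
        have hvl : IsVl ρ c := by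
          constructor
          · rw [inv_of_eq hρp]
            exact hcp
          · rw [hρc]
            exact lt_trans hcp a3
        rcases psb_vl_char hn hrt hrps hvl with h0 | ⟨q, hsbq, hqv⟩
        · omega
        · have hqp : q = p := Fin.ext (by omega)
          rw [hqp] at hsbq
          obtain ⟨hf1, hf2, hf3⟩ := desc_inpred hn hyt hypk hpd (by omega)
          have hρp' : ρ (y⁻¹ p) = p := (pin (y⁻¹ p) (lt_trans hcp hf1) hf3).trans hf2
          have hinvp : ρ⁻¹ p = y⁻¹ p := inv_of_eq hρp'
          rcases hsbq with ⟨b1, _, _⟩ | ⟨_, b2, _⟩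
          · rw [hinvp] at b1
            exact absurd b1 (not_lt.mpr hf1.le)
          · rw [hinvp] at b2
            have := Fin.lt_def.mp hf1
            omega
      · -- B-desc
        have hxinvp : x⁻¹ p = c := Fin.ext (by omega)
        have hxcp : x c = p := by rw [← hxinvp]; simp
        rw [hxcp] at hρc
        have hpkp : IsPeak ρ p := by
          constructor
          · rw [inv_of_eq hρc]
            exact hcp
          · rw [hρp]
            exact hcp
        have hsbρp := rho_peak_sb hrps hpkp (by omega)
        rcases hsbρp with ⟨_, _, b3⟩ | ⟨b1, _, _⟩
        · rw [hρp, hρc] at b3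
          exact lt_irrefl _ b3
        · rw [inv_of_eq hρc, inv_of_eq hρp] at b1
          exact lt_irrefl _ b1

include hn hxt hxps hyt hypk hlink hrt hrps hsub in
lemma ascpin (hT : ρ ⟨n-1, by omega⟩ = y ⟨n-1, by omega⟩) :
    ∀ z : Fin n, z < y z → ρ z = y z := by
  have Hvlc := hyvlc hn hyt hypk
  have Hpkc := hypkc (y := y) hypk
  have hD := dpin hn hxt hxps hyt hypk hlink hrt hrps hsub hT
  suffices H : ∀ m, ∀ z : Fin n, n - 1 - (z:ℕ) ≤ m → z < y z → ρ z = y z by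
    exact fun z hz => H (n-1) z (by omega) hz
  intro m
  induction m with
  | zero =>
    intro z hmz hz
    exfalso
    have h1 := Fin.lt_def.mp hz
    have h2 := (y z).isLt
    omega
  | succ m ih =>
    intro z hmz hz
    have hztop : (z:ℕ) < n - 1 := by
      have := Fin.lt_def.mp hz; have := (y z).isLt; omega
    have pinA : ∀ z' : Fin n, z < z' → z' < y z' → ρ z' = y z' := by
      intro z' hlt hasc
      exact ih z' (by have := Fin.lt_def.mp hlt; omega) hasc
    by_contra hne
    have hρz : ρ z = x z := by
      rcases hsub z with h | h
      · exact h
      · exact absurd h hne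
    have hxyne : x z ≠ y z := fun hxy => hne (by rw [hρz, hxy])
    rcases lt_trichotomy (ρ z) z with hg | hg | hg
    · -- g < z
      have hz1 : 1 ≤ (z:ℕ) := by have := Fin.lt_def.mp hg; omega
      rcases dichot hyt (by omega) (ρ z) with hga | hgd
      case inr =>
        -- g descender : pinned in-edge conflict
        have hgtop : ((ρ z : Fin n):ℕ) ≠ n - 1 := by
          have := Fin.lt_def.mp hg
          omega
        obtain ⟨hs1, hs2, hs3⟩ := desc_inpred hn hyt hypk hgd hgtop
        have hps := hD (y⁻¹ (ρ z)) hs3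
        rw [hs2] at hps
        have hinj := ρ.injective hps
        rw [hinj] at hs2
        rw [← hs2] at hg
        exact absurd hg (not_lt.mpr hz.le)
      case inl =>
        -- g ascender : peak analysis at z
        have hr : ρ⁻¹ z < z := by
          rcases lt_trichotomy (ρ⁻¹ z) z with h | h | h
          · exact h
          · exact absurd h (tour_inv_ne hrt (by omega) z)
          · exfalso
            have hρr : ρ (ρ⁻¹ z) = z := by simp
            rcases dichot hyt (by omega) (ρ⁻¹ z) with hra | hrd
            · have hthis := pinA (ρ⁻¹ z) h hra
              rw [hρr] at hthis
              rw [← hthis] at hra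
              exact absurd hra (not_lt.mpr h.le)
            · have hthis := hD (ρ⁻¹ z) hrd
              rw [hρr] at hthis
              have hpred := asc_pred hn hyt Hvlc hz (by omega)
              have heq : y⁻¹ z = ρ⁻¹ z := inv_of_eq hthis.symm
              rw [heq] at hpred
              exact absurd hpred (not_lt.mpr h.le)
        have hsbz : IsStepBackPeak ρ z := rho_peak_sb hrps ⟨hr, hg⟩ (by omega)
        have hz2 : 2 ≤ (z:ℕ) := sb_ge_two hsbz
        rcases hsbz with ⟨s1, s2, s3⟩ | ⟨s1, s2, s3⟩
        · -- asc-SB at z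
          have hyw : y (ρ z) = z := consec_asc_y hn hyt hypk hga hz s2
          have hρw : ρ (ρ z) = x (ρ z) := by
            rcases hsub (ρ z) with h | h
            · exact h
            · exfalso; rw [h, hyw] at s3; exact lt_irrefl _ s3
          rcases lt_trichotomy (x⁻¹ z) z with hxb | hxb | hxb
          · -- SB x z asc → z part of step-back, contradiction with z ascending
            have hs2' : ((x z : Fin n):ℕ) + 1 = (z:ℕ) := by
              rw [← hρz]; exact s2
            have hs3' : z < x (x z) := by
              have e1 : x (x z) = ρ (ρ z) := by rw [← hρz, ← hρw]
              rw [e1]; exact s3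
            exact absurd (Or.inl ⟨hxb, hs2', hs3'⟩ : IsStepBackPeak x z)
              (asc_not_sb hn hlink hz (by omega))
          · exact absurd hxb (tour_inv_ne hxt (by omega) z)
          · -- x-valley at ρ z
            have hxinv : x⁻¹ (ρ z) = z := by
              rw [hρz]; simp
            have hvlx : IsVl x (ρ z) := by
              constructor
              · rw [hxinv]; exact hg
              · rw [← hρw]; exact lt_trans hg s3
            rcases psb_vl_char hn hxt hxps hvlx with h0 | ⟨p', hsbp', hp'v⟩
            · omega
            · have hp'z : p' = z := Fin.ext (by omega)
              rw [hp'z] at hsbp'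
              rcases hsbp' with ⟨b1, _, _⟩ | ⟨_, b2, _⟩
              · exact absurd b1 (not_lt.mpr hxb.le)
              · have := Fin.lt_def.mp hxb
                omega
        · -- desc-SB at z
          have hρr2 : ρ (ρ⁻¹ z) = z := by simp
          have hρZ2 : ρ (ρ⁻¹ (ρ⁻¹ z)) = ρ⁻¹ z := by simp
          rcases dichot hyt (by omega) (ρ⁻¹ (ρ⁻¹ z)) with hZa | hZd
          · have := pinA (ρ⁻¹ (ρ⁻¹ z)) s1 hZa
            rw [hρZ2] at this
            rcases asc_target hn hyt Hpkc hZa with h0 | h2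
            · rw [← this] at h0
              have := Fin.lt_def.mp s1
              have := (z).isLt
              omega
            · rw [← this] at h2
              have h3 := Fin.lt_def.mp h2
              have h4 := Fin.lt_def.mp s1
              omega
          · have := hD (ρ⁻¹ (ρ⁻¹ z)) hZd
            rw [hρZ2] at this
            rcases desc_target hn hyt Hvlc hZd with h0 | h2
            · rw [← this] at h0
              omega
            · rw [← this] at h2
              -- ρ⁻¹ z is a descender: but ρ (ρ⁻¹ z) = z > ρ⁻¹ z, conflicting with dpin
              have := hD (ρ⁻¹ z) h2
              rw [hρr2] at this
              have h3 := Fin.lt_def.mp h2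
              have h4 := Fin.val_eq_of_eq this
              omega
    · exact absurd hg (tour_ne hrt (by omega) z)
    · -- g > z
      have hρc0 : ρ (y⁻¹ (ρ z)) = ρ z := by
        have hc0ne : y⁻¹ (ρ z) ≠ z := by
          intro hcz
          have hyzr : y z = ρ z := by
            have := congrArg y hcz.symm
            simpa using this
          rw [hρz] at hyzr
          exact hxyne hyzr.symm
        rcases lt_trichotomy (y⁻¹ (ρ z)) z with h | h | h
        · exfalso
          -- c₀ < z, ascender with target beyond z: contradicts asc_next
          have happ : y (y⁻¹ (ρ z)) = ρ z := by simp
          have hc0asc : y⁻¹ (ρ z) < y (y⁻¹ (ρ z)) := by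
            rw [happ]; exact lt_trans h hg
          have hcs : z < y (y⁻¹ (ρ z)) := by rw [happ]; exact hg
          have := asc_next hn hyt Hpkc Hvlc hc0asc h hcs
          exact absurd this (not_lt.mpr hz.le)
        · exact absurd h hc0ne
        · exfalso
          rcases dichot hyt (by omega) (y⁻¹ (ρ z)) with hca | hcd
          · have := pinA (y⁻¹ (ρ z)) h hca
            simp only [Equiv.Perm.inv_def, Equiv.apply_symm_apply] at this
            have := ρ.injective this
            exact hc0ne this
          · have := hD (y⁻¹ (ρ z)) hcd
            simp only [Equiv.Perm.inv_def, Equiv.apply_symm_apply] at this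
            have := ρ.injective this
            exact hc0ne this
      have hinj := ρ.injective hρc0
      have h2 : y z = ρ z := by
        have := congrArg y hinj.symm
        simpa using this
      rw [hρz] at h2
      exact hxyne h2.symm

include hn hxt hxps hyt hypk hlink hrt hrps hsub in
theorem yout (hT : ρ ⟨n-1, by omega⟩ = y ⟨n-1, by omega⟩) : ρ = y := by
  apply Equiv.ext
  intro i
  rcases dichot hyt (by omega) i with h | h
  · exact ascpin hn hxt hxps hyt hypk hlink hrt hrps hsub hT i h
  · exact dpin hn hxt hxps hyt hypk hlink hrt hrps hsub hT i h

include hn hxt hxps hyt hypk hlink in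
omit hrt hrps hsub in
lemma top_agree_eq (T : Fin n) (hTval : (T:ℕ) = n - 1) (hT : x T = y T) : x = y := by
  have Hvlc := hyvlc hn hyt hypk
  have Hpkc := hypkc (y := y) hypk
  have hTpk : IsPeak y T := (hypk _).mpr hTval
  have hTd : y T < T := hTpk.2
  by_cases hP : ((y T : Fin n) : ℕ) = 0
  · -- all middle cities ascend in both x and y ; x = y = the successor cycle
    have hyasc : ∀ c : Fin n, (c:ℕ) < n - 1 → c < y c := by
      intro c hc
      by_cases hc0 : (c:ℕ) = 0
      · rcases dichot hyt (by omega) c with h | h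
        · exact h
        · exfalso; have := Fin.lt_def.mp h; omega
      · exact desc_next hn hyt Hpkc Hvlc hTd (Fin.lt_def.mpr (by omega))
          (Fin.lt_def.mpr (by omega))
    have hxsb : ∀ p : Fin n, ¬ IsStepBackPeak x p := by
      intro p hsb
      have h2 := sb_ge_two hsb
      have h3 := sb_top_lt (σ := x) (by omega) hsb
      have := (hlink p (by omega) (by omega)).mp (hyasc p h3)
      exact this (Or.inl hsb)
    have hxpk : ∀ i : Fin n, IsPeak x i → (i:ℕ) = n - 1 := by
      intro i hp
      rcases (psb_peak_iff hxps).mp hp with h | h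
      · exact h
      · exact absurd h (hxsb i)
    have hxvlc : ∀ v : Fin n, IsVl x v → (v:ℕ) = 0 := by
      intro v hv
      rcases psb_vl_char hn hxt hxps hv with h | ⟨p, hp, _⟩
      · exact h
      · exact absurd hp (hxsb p)
    have hTdx : x T < T := by rw [hT]; exact hTd
    have hPx : ((x T : Fin n) : ℕ) = 0 := by rw [hT]; exact hP
    have hxasc : ∀ c : Fin n, (c:ℕ) < n - 1 → c < x c := by
      intro c hc
      by_cases hc0 : (c:ℕ) = 0
      · rcases dichot hxt (by omega) c with h | h
        · exact h
        · exfalso; have := Fin.lt_def.mp h; omega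
      · exact desc_next hn hxt hxpk hxvlc hTdx (Fin.lt_def.mpr (by omega))
          (Fin.lt_def.mpr (by omega))
    have hsucc : ∀ σ : Equiv.Perm (Fin n), IsTour σ →
        (∀ i : Fin n, IsPeak σ i → (i:ℕ) = n - 1) →
        (∀ v : Fin n, IsVl σ v → (v:ℕ) = 0) →
        (∀ c : Fin n, (c:ℕ) < n - 1 → c < σ c) →
        ∀ i : Fin n, (i:ℕ) < n - 1 → ((σ i : Fin n):ℕ) = (i:ℕ) + 1 := by
      intro σ htσ hpkσ hvlσ hascσ i hi
      by_contra hne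
      have h1 := Fin.lt_def.mp (hascσ i hi)
      have hlt : (i:ℕ) + 1 < ((σ i : Fin n):ℕ) := by omega
      have hi1 : (i:ℕ) + 1 < n := by omega
      by_cases htop : (i:ℕ) + 1 = n - 1
      · have h5 := (σ i).isLt
        omega
      · have hc1v : ((⟨(i:ℕ)+1, hi1⟩ : Fin n):ℕ) = (i:ℕ)+1 := rfl
        have hic1 : i < (⟨(i:ℕ)+1, hi1⟩ : Fin n) := Fin.lt_def.mpr (by omega)
        have hc1s : (⟨(i:ℕ)+1, hi1⟩ : Fin n) < σ i := Fin.lt_def.mpr (by omega)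
        have hd := asc_next hn htσ hpkσ hvlσ (hascσ i hi) hic1 hc1s
        have ha1 := hascσ ⟨(i:ℕ)+1, hi1⟩ (by omega)
        exact absurd hd (not_lt.mpr ha1.le)
    apply Equiv.ext
    intro i
    by_cases hi : (i:ℕ) < n - 1
    · have e1 := hsucc x hxt hxpk hxvlc hxasc i hi
      have e2 := hsucc y hyt Hpkc Hvlc hyasc i hi
      exact Fin.ext (by omega)
    · have : i = T := Fin.ext (by have := i.isLt; omega)
      rw [this]
      exact hT
  · -- y T ≥ 1 : impossible
    exfalso
    have hPd : y (y T) < y T := by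
      rcases desc_target hn hyt Hvlc hTd with h | h
      · exact absurd h hP
      · exact h
    have hPlt : ((y T : Fin n):ℕ) < n - 1 := by
      have := Fin.lt_def.mp hTd; omega
    rcases part_of hn hxps hyt hlink hPd hPlt with hsb | ⟨p, hpv, hsbp⟩
    · have hxinv : x⁻¹ (y T) = T := by
        rw [← hT]; simp
      rcases hsb with ⟨b1, _, _⟩ | ⟨_, b2, _⟩
      · rw [hxinv] at b1
        have := Fin.lt_def.mp b1
        omega
      · rw [hxinv] at b2
        omega
    · have hp2 := sb_ge_two hsbp
      have hpt := sb_top_lt (σ := x) (by omega) hsbp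
      have hpd : y p < p := by
        have hnasc : ¬ (p < y p) :=
          fun hasc => absurd (Or.inl hsbp : PartOfStepBack x p)
            ((hlink p (by omega) (by omega)).mp hasc)
        rcases dichot hyt (by omega) p with h | h
        · exact absurd h hnasc
        · exact h
      have := desc_next hn hyt Hpkc Hvlc hTd
        (show y T < p from Fin.lt_def.mpr (by omega))
        (show p < T from Fin.lt_def.mpr (by omega))
      exact absurd this (not_lt.mpr hpd.le)

end main

end PSBaux

namespace PSBaux

lemma chv_inj {n : ℕ} {τ τ' : Equiv.Perm (Fin n)} (h : chv τ = chv τ') : τ = τ' := by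
  apply Equiv.ext
  intro i
  have := congrFun h (i, τ i)
  simp only [chv, if_pos rfl] at this
  by_cases hc : τ' i = τ i
  · exact hc.symm
  · rw [if_neg hc] at this
    exact absurd this one_ne_zero

lemma chv_nonneg {n : ℕ} (τ : Equiv.Perm (Fin n)) (e : Fin n × Fin n) : 0 ≤ chv τ e := by
  unfold chv
  split <;> norm_num

lemma chv_le_one {n : ℕ} (τ : Equiv.Perm (Fin n)) (e : Fin n × Fin n) : chv τ e ≤ 1 := by
  unfold chv
  split <;> norm_num

theorem stmt6_aux (n : ℕ) (hn : 4 ≤ n) (x y : Equiv.Perm (Fin n))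
    (hx : IsPSB x) (hy : IsPyramidal y)
    (h : ∀ i : Fin n, 1 ≤ (i : ℕ) → (i : ℕ) ≤ n - 2 →
      (i < y i ↔ ¬ PartOfStepBack x i)) :
    x = y ∨ AdjacentIn (PSBvertices n) (chv x) (chv y) := by
  classical
  by_cases hxy : x = y
  · exact Or.inl hxy
  right
  have hxt := hx.1
  have hxps := hx.2
  have hyt := hy.1
  have hypk := hy.2
  have hTT : n - 1 < n := by omega
  set TT : Fin n := ⟨n-1, hTT⟩ with hTTdef
  have hTval : (TT : ℕ) = n - 1 := rfl
  have hTne : x TT ≠ y TT := fun hT =>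
    hxy (top_agree_eq hn hxt hxps hyt hypk h _ hTval hT)
  have hyPSB : IsPSB y := ⟨hyt, hyps_y hypk⟩
  have hu : chv x ∈ PSBvertices n := ⟨x, hx, rfl⟩
  have hw : chv y ∈ PSBvertices n := ⟨y, hyPSB, rfl⟩
  have hune : chv x ≠ chv y := fun hch => hxy (chv_inj hch)
  refine ⟨hune, ?_, ?_⟩
  · exact (convex_convexHull ℝ _).segment_subset (subset_convexHull _ _ hu)
      (subset_convexHull _ _ hw)
  intro a ha b hb z hzseg hzopen
  -- finite vertex set
  set Sfin : Finset (Fin n × Fin n → ℝ) :=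
    (Finset.univ.filter (fun τ : Equiv.Perm (Fin n) => IsPSB τ)).image chv with hSfin
  have hSet : PSBvertices n = ↑Sfin := by
    ext v
    simp only [PSBvertices, Set.mem_image, Set.mem_setOf_eq, hSfin, Finset.coe_image,
      Finset.coe_filter, Finset.mem_univ, true_and]
  have hmem : ∀ v ∈ Sfin, ∃ τ : Equiv.Perm (Fin n), IsPSB τ ∧ chv τ = v := by
    intro v hv
    simp only [hSfin, Finset.mem_image, Finset.mem_filter, Finset.mem_univ, true_and] at hv
    obtain ⟨τ, h1, h2⟩ := hv
    exact ⟨τ, h1, h2⟩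
  have huS : chv x ∈ Sfin := by
    rw [← Finset.mem_coe, ← hSet]; exact hu
  have hwS : chv y ∈ Sfin := by
    rw [← Finset.mem_coe, ← hSet]; exact hw
  rw [hSet, Finset.convexHull_eq] at ha hb
  obtain ⟨wa, hwa0, hwa1, hwacm⟩ := ha
  obtain ⟨wb, hwb0, hwb1, hwbcm⟩ := hb
  obtain ⟨ta, tb, hta, htb, htab, htz⟩ := hzopen
  obtain ⟨c1, c2, hc1, hc2, hc12, hcz⟩ := hzseg
  have haeq : a = ∑ v ∈ Sfin, wa v • v := by
    rw [← hwacm, Finset.centerMass_eq_of_sum_1 _ _ hwa1]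
    simp
  have hbeq : b = ∑ v ∈ Sfin, wb v • v := by
    rw [← hwbcm, Finset.centerMass_eq_of_sum_1 _ _ hwb1]
    simp
  set μ : (Fin n × Fin n → ℝ) → ℝ := fun v => ta * wa v + tb * wb v with hμ
  have hμ0 : ∀ v ∈ Sfin, 0 ≤ μ v := fun v hv =>
    add_nonneg (mul_nonneg hta.le (hwa0 v hv)) (mul_nonneg htb.le (hwb0 v hv))
  have hμsum : ∑ v ∈ Sfin, μ v = 1 := by
    simp only [hμ]
    rw [Finset.sum_add_distrib, ← Finset.mul_sum, ← Finset.mul_sum, hwa1, hwb1]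
    simpa using htab
  have hzeq : z = ∑ v ∈ Sfin, μ v • v := by
    rw [← htz, haeq, hbeq, Finset.smul_sum, Finset.smul_sum, ← Finset.sum_add_distrib]
    apply Finset.sum_congr rfl
    intro v _
    simp only [hμ, smul_smul, add_smul]
  have hzval : ∀ e : Fin n × Fin n, z e = ∑ v ∈ Sfin, μ v * v e := by
    intro e
    rw [hzeq]
    rw [Finset.sum_apply]
    apply Finset.sum_congr rfl
    intro v _
    simp
  have hzval2 : ∀ e : Fin n × Fin n, z e = c1 * chv x e + c2 * chv y e := by
    intro e
    rw [← hcz]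
    simp
  -- step 1 : support permutations live in the union
  have hsubτ : ∀ v ∈ Sfin, μ v ≠ 0 → ∀ τ : Equiv.Perm (Fin n), chv τ = v →
      ∀ i : Fin n, τ i = x i ∨ τ i = y i := by
    intro v hv hμne τ hτ i
    by_contra hboth
    push_neg at hboth
    have hze : z (i, τ i) = 0 := by
      rw [hzval2]
      simp only [chv]
      rw [if_neg (fun hc : x i = τ i => hboth.1 hc.symm),
        if_neg (fun hc : y i = τ i => hboth.2 hc.symm)]
      ring
    rw [hzval] at hze
    have hall := (Finset.sum_eq_zero_iff_of_nonneg (fun v' hv' =>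
      mul_nonneg (hμ0 _ hv') (by
        obtain ⟨τ', _, h'⟩ := hmem v' hv'
        rw [← h']
        exact chv_nonneg τ' _))).mp hze
    have hthis := hall v hv
    have hone : v (i, τ i) = 1 := by rw [← hτ]; simp [chv]
    rw [hone, mul_one] at hthis
    exact hμne hthis
  -- step 2a : the only support vertex using edge (T, y T) is chv y
  have hyout : ∀ v ∈ Sfin, μ v ≠ 0 → v ≠ chv y →
      ∀ τ : Equiv.Perm (Fin n), chv τ = v → τ TT = x TT := by
    intro v hv hμne hvne τ hτ
    rcases hsubτ v hv hμne τ hτ TT with hc | hc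
    · exact hc
    · exfalso
      obtain ⟨τ', hτ', hτeq⟩ := hmem v hv
      have hττ' : τ' = τ := chv_inj (by rw [hτeq, hτ])
      rw [hττ'] at hτ'
      have := yout hn hxt hxps hyt hypk h hτ'.1 hτ'.2
        (fun i => hsubτ v hv hμne τ hτ i) hc
      rw [this] at hτ
      exact hvne hτ.symm
  have heyT : z (TT, y TT) = c2 := by
    rw [hzval2]
    simp [chv, hTne]
  have hμy : μ (chv y) = c2 := by
    have hsum := (hzval (TT, y TT)).symm.trans heyT
    rw [Finset.sum_eq_single_of_mem (chv y) hwS] at hsum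
    · simpa [chv] using hsum
    · intro v hv hvne
      by_cases hμne : μ v = 0
      · rw [hμne]; ring
      · obtain ⟨τ, _, hτeq⟩ := hmem v hv
        have := hyout v hv hμne hvne τ hτeq
        rw [← hτeq]
        simp only [chv]
        rw [if_neg (by rw [this]; exact hTne), mul_zero]
  -- step 2b : every other support vertex is chv x
  have hsupp : ∀ v ∈ Sfin, μ v ≠ 0 → v = chv x ∨ v = chv y := by
    intro v hv hμne
    by_cases hvy : v = chv y
    · exact Or.inr hvy
    left
    obtain ⟨τ, hτPSB, hτeq⟩ := hmem v hv
    suffices hτx : τ = x by rw [← hτeq, hτx]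
    -- show μ-weighted mass off chv y saturates every x-edge
    have key : ∀ i : Fin n, τ i = x i := by
      intro i
      have hxe : z (i, x i) = c1 + c2 * chv y (i, x i) := by
        rw [hzval2]
        simp [chv]
        try ring
      have hsplit : ∑ v' ∈ Sfin.erase (chv y), μ v' * v' (i, x i)
          = c1 := by
        have := (hzval (i, x i)).symm.trans hxe
        rw [← Finset.add_sum_erase _ _ hwS, hμy] at this
        have hcomm : μ (chv y) * chv y (i, x i) = c2 * chv y (i, x i) := by rw [hμy]
        linarith [this]
      have hmass : ∑ v' ∈ Sfin.erase (chv y), μ v' = c1 := by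
        have := hμsum
        rw [← Finset.add_sum_erase _ _ hwS, hμy] at this
        linarith
      have hzero : ∑ v' ∈ Sfin.erase (chv y), μ v' * (1 - v' (i, x i)) = 0 := by
        have : ∑ v' ∈ Sfin.erase (chv y), μ v' * (1 - v' (i, x i))
            = (∑ v' ∈ Sfin.erase (chv y), μ v') -
              ∑ v' ∈ Sfin.erase (chv y), μ v' * v' (i, x i) := by
          rw [← Finset.sum_sub_distrib]
          apply Finset.sum_congr rfl
          intro v' _
          ring
        rw [this, hmass, hsplit]
        ring
      have hterm := (Finset.sum_eq_zero_iff_of_nonneg (fun v' hv' => by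
        obtain ⟨τ', _, rfl⟩ := hmem v' (Finset.mem_of_mem_erase hv')
        exact mul_nonneg (hμ0 _ (Finset.mem_of_mem_erase hv'))
          (by linarith [chv_le_one τ' (i, x i)]))).mp hzero
      have hvmem : v ∈ Sfin.erase (chv y) := Finset.mem_erase.mpr ⟨hvy, hv⟩
      have := hterm v hvmem
      rcases mul_eq_zero.mp this with hc | hc
      · exact absurd hc hμne
      · have : v (i, x i) = 1 := by linarith
        rw [← hτeq] at this
        simp only [chv] at this
        by_cases hcc : τ i = x i
        · exact hcc
        · rw [if_neg hcc] at this; norm_num at this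
    exact Equiv.ext key
  -- step 3 : a and b lie on the segment
  have final : ∀ (wc : (Fin n × Fin n → ℝ) → ℝ), (∀ v ∈ Sfin, 0 ≤ wc v) →
      ∑ v ∈ Sfin, wc v = 1 → (∀ v ∈ Sfin, wc v ≠ 0 → μ v ≠ 0) →
      (∑ v ∈ Sfin, wc v • v) ∈ segment ℝ (chv x) (chv y) := by
    intro wc hwc0 hwc1 hwcsupp
    have hvanish : ∀ v ∈ Sfin, v ∉ ({chv x, chv y} : Finset (Fin n × Fin n → ℝ)) →
        wc v • v = 0 := by
      intro v hv hvne
      simp only [Finset.mem_insert, Finset.mem_singleton] at hvne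
      push_neg at hvne
      by_cases hwcz : wc v = 0
      · rw [hwcz]; simp
      · rcases hsupp v hv (hwcsupp v hv hwcz) with hc | hc
        · exact absurd hc hvne.1
        · exact absurd hc hvne.2
    have hpair : ({chv x, chv y} : Finset (Fin n × Fin n → ℝ)) ⊆ Sfin := by
      intro v hv
      simp only [Finset.mem_insert, Finset.mem_singleton] at hv
      rcases hv with rfl | rfl
      · exact huS
      · exact hwS
    have hsum_eq : ∑ v ∈ Sfin, wc v • v = wc (chv x) • chv x + wc (chv y) • chv y := by
      rw [← Finset.sum_subset hpair (fun v hv hnv => hvanish v hv hnv)]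
      rw [Finset.sum_pair hune]
    have hsum1_eq : wc (chv x) + wc (chv y) = 1 := by
      rw [← hwc1]
      have hz' : ∀ v ∈ Sfin, v ∉ ({chv x, chv y} : Finset (Fin n × Fin n → ℝ)) →
          wc v = 0 := by
        intro v hv hvne
        by_contra hwcz
        have := hvanish v hv hvne
        simp only [Finset.mem_insert, Finset.mem_singleton] at hvne
        rcases hsupp v hv (hwcsupp v hv hwcz) with hc | hc
        · exact (not_or.mp hvne).1 hc
        · exact (not_or.mp hvne).2 hc
      rw [← Finset.sum_subset hpair (fun v hv hnv => hz' v hv hnv)]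
      rw [Finset.sum_pair hune]
    rw [hsum_eq]
    exact ⟨wc (chv x), wc (chv y), hwc0 _ huS, hwc0 _ hwS, hsum1_eq, rfl⟩
  suffices hab : a ∈ segment ℝ (chv x) (chv y) ∧ b ∈ segment ℝ (chv x) (chv y) from hab.1
  constructor
  · rw [haeq]
    refine final wa hwa0 hwa1 ?_
    intro v hv hwane
    simp only [hμ]
    have h1 : 0 < ta * wa v := mul_pos hta (lt_of_le_of_ne (hwa0 v hv) (Ne.symm hwane))
    have h2 : 0 ≤ tb * wb v := mul_nonneg htb.le (hwb0 v hv)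
    linarith
  · rw [hbeq]
    refine final wb hwb0 hwb1 ?_
    intro v hv hwbne
    simp only [hμ]
    have h1 : 0 < tb * wb v := mul_pos htb (lt_of_le_of_ne (hwb0 v hv) (Ne.symm hwbne))
    have h2 : 0 ≤ ta * wa v := mul_nonneg hta.le (hwa0 v hv)
    linarith

end PSBaux

/-- For a pyramidal tour with step-backs `x`, the pyramidal tour `y = x̂` visiting a city
descending iff it is part of a step-back of `x` gives a vertex adjacent to `v(x)` in the
1-skeleton of `PSB(n)` (unless the tours coincide). -/
theorem stmt6 (n : ℕ) (hn : 4 ≤ n) (x y : Equiv.Perm (Fin n))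
    (hx : IsPSB x) (hy : IsPyramidal y)
    (h : ∀ i : Fin n, 1 ≤ (i : ℕ) → (i : ℕ) ≤ n - 2 →
      (i < y i ↔ ¬ PartOfStepBack x i)) :
    x = y ∨ AdjacentIn (PSBvertices n) (chv x) (chv y) := by
  exact PSBaux.stmt6_aux n hn x y hx hy h
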